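/- Let {X_i} be i.i.d. Bernoulli random variables with P(X_0 = 1) = α and P(X_0 = 0) = 1 - α, where α ≥ 0.9. Then for every n ≥ 1, P(∑_{i=1}^n X_i ≤ n/2) ≤ 10(1 - α). -/

import Mathlib

open MeasureTheory ProbabilityTheory

theorem stmt_0 {Ω : Type*} [MeasurableSpace Ω] (P : Measure Ω)
    [IsProbabilityMeasure P] (α : ℝ) (hα : 0.9 ≤ α) (hα1 : α ≤ 1)
    (X : ℕ → Ω → ℝ) (hmeas : ∀ i, Measurable (X i))
    (hindep : iIndepFun X P)
    (hident : ∀ i, Measure.map (X i) P = Measure.map (X 0) P)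
    (h1 : ∀ i, P {ω | X i ω = 1} = ENNReal.ofReal α)
    (h0 : ∀ i, P {ω | X i ω = 0} = ENNReal.ofReal (1 - α)) :
    ∀ n : ℕ, 1 ≤ n →
      P {ω | ∑ i ∈ Finset.Icc 1 n, X i ω ≤ (n : ℝ) / 2}
        ≤ ENNReal.ofReal (10 * (1 - α)) := by
  intro n hn
  -- a.e. each X i ∈ {0,1}
  have hα0 : (0:ℝ) ≤ α := by linarith
  have hae : ∀ i, ∀ᵐ ω ∂P, X i ω = 0 ∨ X i ω = 1 := by
    intro i
    have hA : MeasurableSet {ω | X i ω = 1} := (hmeas i) (measurableSet_singleton 1)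
    have hB : MeasurableSet {ω | X i ω = 0} := (hmeas i) (measurableSet_singleton 0)
    have hdisj : Disjoint {ω | X i ω = 0} {ω | X i ω = 1} := by
      rw [Set.disjoint_left]; intro ω h1' h2'
      simp only [Set.mem_setOf_eq] at h1' h2'; rw [h1'] at h2'; norm_num at h2'
    have hmeasU : P ({ω | X i ω = 0} ∪ {ω | X i ω = 1}) = 1 := by
      rw [measure_union hdisj hA, h0 i, h1 i, ← ENNReal.ofReal_add (by linarith) hα0]
      norm_num
    have : P ({ω | X i ω = 0} ∪ {ω | X i ω = 1})ᶜ = 0 := by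
      rw [measure_compl (hB.union hA) (measure_ne_top _ _), hmeasU, measure_univ]
      simp
    filter_upwards [measure_eq_zero_iff_ae_notMem.mp this] with ω hω
    rw [Set.notMem_compl_iff] at hω
    exact hω
  -- X i =ᵐ indicator
  have hind : ∀ i, X i =ᵐ[P] Set.indicator {ω | X i ω = 1} (fun _ => (1:ℝ)) := by
    intro i
    filter_upwards [hae i] with ω hω
    rcases hω with h | h
    · rw [h, Set.indicator_of_notMem]; simp [h]
    · rw [h, Set.indicator_of_mem]; simpa using h
  have hint : ∀ i, ∫ ω, X i ω ∂P = α := by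
    intro i
    have hA : MeasurableSet {ω | X i ω = 1} := hmeas i (measurableSet_singleton 1)
    rw [integral_congr_ae (hind i), integral_indicator_const (1:ℝ) hA,
      measureReal_def, h1 i, ENNReal.toReal_ofReal hα0, smul_eq_mul, mul_one]
  have hmem : ∀ i, MemLp (X i) 2 P := by
    intro i
    refine memLp_of_bounded ?_ (hmeas i).aestronglyMeasurable 2 (a := 0) (b := 1)
    filter_upwards [hae i] with ω hω
    rcases hω with h | h <;> simp [h]
  have hvar : ∀ i, variance (X i) P = α - α ^ 2 := by
    intro i
    rw [variance_eq_sub (hmem i)]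
    have hsq : (fun ω => X i ω ^ 2) =ᵐ[P] X i := by
      filter_upwards [hae i] with ω hω
      rcases hω with h | h <;> simp [h]
    have : ∫ ω, (X i ^ 2) ω ∂P = α := by
      rw [integral_congr_ae]; exact hint i
      exact hsq
    rw [this, hint i]
  -- sum
  set S : Ω → ℝ := ∑ i ∈ Finset.Icc 1 n, X i with hS
  have hSmem : MemLp S 2 P := memLp_finset_sum' _ (fun i _ => hmem i)
  have hES : ∫ ω, S ω ∂P = n * α := by
    rw [hS]
    simp only [Finset.sum_apply]
    rw [integral_finset_sum _ (fun i _ => (hmem i).integrable one_le_two)]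
    simp_rw [hint]
    rw [Finset.sum_const, Nat.card_Icc]
    simp
  have hVarS : variance S P = n * (α - α ^ 2) := by
    rw [hS, IndepFun.variance_sum (fun i _ => hmem i)
      (fun i _ j _ hij => hindep.indepFun hij)]
    simp_rw [hvar]
    rw [Finset.sum_const, Nat.card_Icc]
    simp
  set c : ℝ := n * (α - 1/2) with hc
  have hcpos : 0 < c := by
    have : (1:ℝ) ≤ n := by exact_mod_cast hn
    have : (0:ℝ) < n := by linarith
    apply mul_pos this; norm_num at hα ⊢; linarith
  have hsub : {ω | ∑ i ∈ Finset.Icc 1 n, X i ω ≤ (n : ℝ) / 2} ⊆ {ω | c ≤ |S ω - P[S]|} := by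
    intro ω hω
    simp only [Set.mem_setOf_eq] at hω ⊢
    have hSω : S ω = ∑ i ∈ Finset.Icc 1 n, X i ω := by simp [hS]
    rw [hES, hSω]
    rw [abs_sub_comm, abs_of_nonneg (by nlinarith)]
    nlinarith
  calc P {ω | ∑ i ∈ Finset.Icc 1 n, X i ω ≤ (n : ℝ) / 2}
      ≤ P {ω | c ≤ |S ω - P[S]|} := measure_mono hsub
    _ ≤ ENNReal.ofReal (variance S P / c ^ 2) := meas_ge_le_variance_div_sq hSmem hcpos
    _ ≤ ENNReal.ofReal (10 * (1 - α)) := by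
        apply ENNReal.ofReal_le_ofReal
        rw [hVarS, hc]
        rw [div_le_iff₀ (by positivity)]
        have hn1 : (1:ℝ) ≤ n := by exact_mod_cast hn
        have h16 : (0.16:ℝ) ≤ (α - 1/2)^2 := by nlinarith
        have : (n:ℝ) * (α - α^2) = n * (α * (1 - α)) := by ring
        have h1α : (0:ℝ) ≤ 1 - α := by linarith
        have key : 0.16 * n ≤ (α - 1/2)^2 * ((n:ℝ))^2 := by nlinarith [sq_nonneg ((n:ℝ))]
        have k2 : 10*(1-α)*(0.16*(n:ℝ)) ≤ 10*(1-α)*((α - 1/2)^2*(n:ℝ)^2) :=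
          mul_le_mul_of_nonneg_left key (by linarith)
        nlinarith [mul_nonneg (mul_nonneg h1α (by positivity : (0:ℝ) ≤ (n:ℝ))) hα0]
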